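/- Let B be a real symmetric positive definite 3×3 matrix and D a real symmetric 3×3 matrix. Then ⟨B² D B, [B,D]⟩ ≥ 0, where [B,D] := B D − D B and ⟨X,Y⟩ := tr(X Yᵀ). -/

import Mathlib

open Matrix

/-- For `B` symmetric positive definite and `D` symmetric,
`⟨B² D B, [B,D]⟩ ≥ 0` where `[B,D] = B D − D B`. -/
theorem inner_sqB_D_B_commutator_nonneg
    (B : Matrix (Fin 3) (Fin 3) ℝ) (hB : B.PosDef)
    (D : Matrix (Fin 3) (Fin 3) ℝ) (hD : Dᵀ = D) :
    0 ≤ ((B ^ 2 * D * B) * (B * D - D * B)ᵀ).trace := by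
  have hBt : Bᵀ = B := (by simpa using hB.1 : B.IsSymm).eq
  obtain ⟨S, hSt, hSS⟩ : ∃ S : Matrix (Fin 3) (Fin 3) ℝ, Sᵀ = S ∧ S * S = B :=
    by open scoped MatrixOrder in exact ⟨CFC.sqrt B, (by simpa using (CFC.sqrt_nonneg B).posSemidef.1 : (CFC.sqrt B).IsSymm).eq,
      CFC.sqrt_mul_sqrt_self B hB.posSemidef.nonneg⟩
  set C := B * D - D * B with hC
  have hCt : Cᵀ = D * B - B * D := by
    simp [hC, transpose_sub, transpose_mul, hBt, hD]
  set a := (B * (B * (B * (D * (B * D))))).trace with ha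
  set b := (B * (B * (D * (B * (B * D))))).trace with hb
  have cyc : ∀ X Y : Matrix (Fin 3) (Fin 3) ℝ, (X * Y).trace = (Y * X).trace :=
    fun X Y => trace_mul_comm X Y
  have h0 : 0 ≤ ((S * C * S) * (S * C * S)ᵀ).trace := by
    simp only [trace, diag, mul_apply, transpose_apply]
    exact Finset.sum_nonneg fun i _ => Finset.sum_nonneg fun j _ => mul_self_nonneg _
  have h1 : ((S * C * S) * (S * C * S)ᵀ).trace = (C * B * Cᵀ * B).trace := by
    rw [transpose_mul, transpose_mul, hSt]
    calc (S * C * S * (S * (Cᵀ * S))).trace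
        = (S * (C * S * (S * (Cᵀ * S)))).trace := by congr 1; noncomm_ring
      _ = ((C * S * (S * (Cᵀ * S))) * S).trace := cyc _ _
      _ = (C * (S * S) * Cᵀ * (S * S)).trace := by congr 1; noncomm_ring
      _ = (C * B * Cᵀ * B).trace := by rw [hSS]
  have h2 : (C * B * Cᵀ * B).trace = 2 * a - 2 * b := by
    rw [hC, hCt]
    have e : (B * D - D * B) * B * (D * B - B * D) * B
        = B * D * B * (D * B) * B - B * D * B * (B * D) * B
          - D * B * B * (D * B) * B + D * B * B * (B * D) * B := by noncomm_ring
    rw [e, trace_add, trace_sub, trace_sub]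
    have t1 : (B * D * B * (D * B) * B).trace = a := by
      rw [show B * D * B * (D * B) * B = (B * D * (B * D)) * (B * B) from by noncomm_ring,
        cyc]
      congr 1; noncomm_ring
    have t2 : (B * D * B * (B * D) * B).trace = b := by
      rw [show B * D * B * (B * D) * B = (B * D) * (B * (B * (D * B))) from by noncomm_ring,
        cyc]
      congr 1; noncomm_ring
    have t3 : (D * B * B * (D * B) * B).trace = b := by
      rw [show D * B * B * (D * B) * B = D * (B * (B * (D * (B * B)))) from by noncomm_ring,
        cyc]
      congr 1; noncomm_ring
    have t4 : (D * B * B * (B * D) * B).trace = a := by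
      rw [show D * B * B * (B * D) * B = D * (B * (B * (B * (D * B)))) from by noncomm_ring,
        cyc]
      congr 1; noncomm_ring
    rw [t1, t2, t3, t4]; ring
  have h3 : ((B ^ 2 * D * B) * (B * D - D * B)ᵀ).trace = a - b := by
    have hCt' : (B * D - D * B)ᵀ = D * B - B * D := hC ▸ hCt
    rw [hCt']
    have e : (B ^ 2 * D * B) * (D * B - B * D)
        = B * B * D * B * (D * B) - B * B * D * B * (B * D) := by
      rw [pow_two]; noncomm_ring
    rw [e, trace_sub]
    have t1 : (B * B * D * B * (D * B)).trace = a := by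
      rw [show B * B * D * B * (D * B) = (B * (B * (D * (B * D)))) * B from by noncomm_ring,
        cyc]
    have t2 : (B * B * D * B * (B * D)).trace = b := by
      congr 1; noncomm_ring
    rw [t1, t2]
  rw [h3]; rw [h1, h2] at h0; linarith
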